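/- If a CF program terminates on all inputs and has no call overlap (no defined function is ever called twice with the same tuple of argument values on any input), then it runs in time polynomial in the input length, i.e., it is in CFpoly. -/

import Mathlib

/-! # Cons-free programs (CF / CFTR / CFpoly / NCF) and Turing-machine complexity classes -/

/-- Values: booleans and bit strings. -/
inductive Val : Type
  | bool : Bool → Val
  | str  : List Bool → Val
deriving DecidableEq, Inhabited

/-- Base operations of cons-free programs. -/
inductive BOp : Type
  | not | null | head | tail
deriving DecidableEq, Inhabited

/-- Expressions.  `amb` is the nondeterministic choice construct of NCF;
CF programs are exactly the choice-free programs. -/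
inductive Exp : Type
  | tt   : Exp
  | ff   : Exp
  | nil  : Exp
  | var  : Nat → Exp
  | base : BOp → Exp → Exp
  | ite  : Exp → Exp → Exp → Exp
  | call : Nat → List Exp → Exp
  | amb  : Exp → Exp → Exp
deriving Inhabited

/-- A function definition `f x1 ... xm = e`: arity `m` and body `e`
(variables are de Bruijn-style indices into the argument list). -/
structure Defn where
  arity : Nat
  body  : Exp
deriving Inhabited

/-- A program is a finite list of function definitions; the first one is the entry point. -/
abbrev Prog := List Defn

/-- Body of the entry (first) function. -/
def Prog.entry (p : Prog) : Exp := p.headI.body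

/-- Semantics of the base functions (partial). -/
def evalBase : BOp → Val → Option Val
  | .not,  .bool b       => some (.bool (!b))
  | .null, .str s        => some (.bool s.isEmpty)
  | .head, .str (b :: _) => some (.bool b)
  | .tail, .str (_ :: s) => some (.str s)
  | _,     _             => none

/- Call-by-value big-step semantics.  `EvalH p ρ e v n h` means: in environment `ρ`
the expression `e` evaluates to `v`, by a computation (proof) tree with `n` nodes
whose call history (the sequence of configurations `(f, arguments)` of calls to
program-defined functions, in evaluation order) is `h`. -/
mutual
inductive EvalH (p : Prog) : List Val → Exp → Val → Nat → List (Nat × List Val) → Prop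
  | tt  {ρ} : EvalH p ρ .tt (.bool true) 1 []
  | ff  {ρ} : EvalH p ρ .ff (.bool false) 1 []
  | nil {ρ} : EvalH p ρ .nil (.str []) 1 []
  | var {ρ : List Val} {i : Nat} {v} : ρ[i]? = some v → EvalH p ρ (.var i) v 1 []
  | base {ρ op e v w n h} :
      EvalH p ρ e v n h → evalBase op v = some w →
      EvalH p ρ (.base op e) w (n + 1) h
  | iteT {ρ e0 e1 e2 v n0 n1 h0 h1} :
      EvalH p ρ e0 (.bool true) n0 h0 → EvalH p ρ e1 v n1 h1 →
      EvalH p ρ (.ite e0 e1 e2) v (n0 + n1 + 1) (h0 ++ h1)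
  | iteF {ρ e0 e1 e2 v n0 n2 h0 h2} :
      EvalH p ρ e0 (.bool false) n0 h0 → EvalH p ρ e2 v n2 h2 →
      EvalH p ρ (.ite e0 e1 e2) v (n0 + n2 + 1) (h0 ++ h2)
  | ambL {ρ e1 e2 v n h} :
      EvalH p ρ e1 v n h → EvalH p ρ (.amb e1 e2) v (n + 1) h
  | ambR {ρ e1 e2 v n h} :
      EvalH p ρ e2 v n h → EvalH p ρ (.amb e1 e2) v (n + 1) h
  | call {ρ : List Val} {f : Nat} {es ws d v m n hs h} :
      p[f]? = some d → EvalArgsH p ρ es ws m hs → ws.length = d.arity →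
      EvalH p ws d.body v n h →
      EvalH p ρ (.call f es) v (m + n + 1) (hs ++ (f, ws) :: h)

inductive EvalArgsH (p : Prog) : List Val → List Exp → List Val → Nat → List (Nat × List Val) → Prop
  | nil {ρ} : EvalArgsH p ρ [] [] 0 []
  | cons {ρ e es v vs n m h hs} :
      EvalH p ρ e v n h → EvalArgsH p ρ es vs m hs →
      EvalArgsH p ρ (e :: es) (v :: vs) (n + m) (h ++ hs)
end

/-- `p, ρ ⊢ e → v`. -/
def Eval (p : Prog) (ρ : List Val) (e : Exp) (v : Val) : Prop := ∃ n h, EvalH p ρ e v n h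

/-- Pointwise evaluation of a list of expressions. -/
def EvalList (p : Prog) (ρ : List Val) (es : List Exp) (ws : List Val) : Prop :=
  List.Forall₂ (Eval p ρ) es ws

/-- `⟦p⟧(x) = v` with computation-tree size `n` and call history `h`. -/
def RunH (p : Prog) (x : List Bool) (v : Val) (n : Nat) (h : List (Nat × List Val)) : Prop :=
  EvalH p [Val.str x] p.entry v n h

/-- `⟦p⟧(x) = v`. -/
def Run (p : Prog) (x : List Bool) (v : Val) : Prop := ∃ n h, RunH p x v n h

/-- `time_p(x) = n`: the computation tree `T^{p,x}` has `n` nodes. -/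
def TimeIs (p : Prog) (x : List Bool) (n : Nat) : Prop := ∃ v h, RunH p x v n h

/-- Deterministic decision: `p` terminates on every input, answering `True` exactly on `X`. -/
def Decides (p : Prog) (X : Set (List Bool)) : Prop :=
  ∀ x : List Bool, (x ∈ X ∧ Run p x (.bool true)) ∨ (x ∉ X ∧ Run p x (.bool false))

/-- Nondeterministic decision: `x ∈ X` iff some computation `⟦p⟧(x) ⇝ True` exists. -/
def NDecides (p : Prog) (X : Set (List Bool)) : Prop :=
  ∀ x : List Bool, x ∈ X ↔ Run p x (.bool true)

/-- `Reach_p(x)`: configurations `(f, ρ)` called at least once in some computation of `p` on `x`. -/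
def Reach (p : Prog) (x : List Bool) : Set (Nat × List Val) :=
  {c | ∃ v n h, RunH p x v n h ∧ c ∈ h}

/-- `V_x = {0,1} ∪ suffixes(x)`: the range of variation on input `x`. -/
def Vx (x : List Bool) : Set Val :=
  {v | (∃ b, v = .bool b) ∨ ∃ s, v = .str s ∧ s <:+ x}

/-- An expression is choice-free (belongs to the CF fragment). -/
inductive NoChoice : Exp → Prop
  | tt : NoChoice .tt
  | ff : NoChoice .ff
  | nil : NoChoice .nil
  | var (i) : NoChoice (.var i)
  | base (op) {e} : NoChoice e → NoChoice (.base op e)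
  | ite {a b c} : NoChoice a → NoChoice b → NoChoice c → NoChoice (.ite a b c)
  | call (f) {es} : (∀ e ∈ es, NoChoice e) → NoChoice (.call f es)

/-- A CF program: a cons-free program with no nondeterministic choice. -/
def CFProg (p : Prog) : Prop := ∀ d ∈ p, NoChoice d.body

/-- Does the expression contain a call to a program-defined function? -/
def hasCall : Exp → Bool
  | .base _ e => hasCall e
  | .ite a b c => hasCall a || hasCall b || hasCall c
  | .call _ _ => true
  | .amb a b => hasCall a || hasCall b
  | _ => false

/-- The classification map `α` with `X = 0 < T = 1 < N = 2`:
`α e = 0` if `e` has no calls; `α e = 1` if all calls in `e` are in tail position;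
`α e = 2` otherwise. -/
def alpha : Exp → Nat
  | .base _ e => if hasCall e then 2 else 0
  | .ite a b c => if hasCall a then 2 else max (alpha b) (alpha c)
  | .call _ es => if es.all (fun e => !hasCall e) then 1 else 2
  | .amb a b => max (alpha a) (alpha b)
  | _ => 0

/-- All calls in every definition body are in tail position (`α(e^f) ∈ {X, T}`). -/
def TRProg (p : Prog) : Prop := ∀ d ∈ p, alpha d.body ≤ 1

/-- A CFTR program: a tail-recursive cons-free program. -/
def CFTRProg (p : Prog) : Prop := CFProg p ∧ TRProg p

/-- Every call in the program is a tail call or a linear call, i.e. no call to a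
defined function is nested inside the argument of another call. -/
def linearOnly : Exp → Bool
  | .base _ e => linearOnly e
  | .ite a b c => linearOnly a && linearOnly b && linearOnly c
  | .call _ es => es.all (fun e => !hasCall e)
  | .amb a b => linearOnly a && linearOnly b
  | _ => true

/-- A CFpoly program: a CF program that terminates on all inputs, in polynomial native time. -/
def CFpolyProg (p : Prog) : Prop :=
  CFProg p ∧ (∀ x, ∃ v, Run p x v) ∧
    ∃ π : Polynomial ℕ, ∀ x n, TimeIs p x n → n ≤ π.eval x.length

/-- A judgment `p, ρ ⊢ e → v` occurs in the computation tree `T^{p,x}`. -/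
inductive Occurs (p : Prog) (x : List Bool) : List Val → Exp → Val → Prop
  | root {v} : Eval p [Val.str x] p.entry v → Occurs p x [Val.str x] p.entry v
  | base {ρ op e v w} : Occurs p x ρ (.base op e) v → Eval p ρ e w → Occurs p x ρ e w
  | iteTest {ρ a b c v w} : Occurs p x ρ (.ite a b c) v → Eval p ρ a w → Occurs p x ρ a w
  | iteT {ρ a b c v} : Occurs p x ρ (.ite a b c) v → Eval p ρ a (.bool true) →
      Eval p ρ b v → Occurs p x ρ b v
  | iteF {ρ a b c v} : Occurs p x ρ (.ite a b c) v → Eval p ρ a (.bool false) →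
      Eval p ρ c v → Occurs p x ρ c v
  | ambL {ρ a b v} : Occurs p x ρ (.amb a b) v → Eval p ρ a v → Occurs p x ρ a v
  | ambR {ρ a b v} : Occurs p x ρ (.amb a b) v → Eval p ρ b v → Occurs p x ρ b v
  | arg {ρ f es v e w} : Occurs p x ρ (.call f es) v → e ∈ es → Eval p ρ e w → Occurs p x ρ e w
  | body {ρ f es ws d v} : Occurs p x ρ (.call f es) v → p[f]? = some d →
      EvalList p ρ es ws → Eval p ws d.body v → Occurs p x ws d.body v

/- The deterministic left-to-right bottom-up evaluator, with fuel bounding call depth. -/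
mutual
def evalFuel (p : Prog) : Nat → List Val → Exp → Option Val
  | _, _, .tt => some (.bool true)
  | _, _, .ff => some (.bool false)
  | _, _, .nil => some (.str [])
  | _, ρ, .var i => ρ[i]?
  | k, ρ, .base op e => (evalFuel p k ρ e).bind (evalBase op)
  | k, ρ, .ite a b c =>
      match evalFuel p k ρ a with
      | some (.bool true) => evalFuel p k ρ b
      | some (.bool false) => evalFuel p k ρ c
      | _ => none
  | _, _, .amb _ _ => none
  | k, ρ, .call f es =>
      match evalArgsFuel p k ρ es with
      | some ws =>
          match k, p[f]? with
          | k' + 1, some d => if ws.length = d.arity then evalFuel p k' ws d.body else none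
          | _, _ => none
      | none => none
termination_by k _ e => (k, sizeOf e)
decreasing_by
  all_goals first
    | decreasing_tactic
    | (simp only [wfParam] at *; apply Prod.Lex.left; omega)

def evalArgsFuel (p : Prog) : Nat → List Val → List Exp → Option (List Val)
  | _, _, [] => some []
  | k, ρ, e :: es =>
      match evalFuel p k ρ e, evalArgsFuel p k ρ es with
      | some v, some vs => some (v :: vs)
      | _, _ => none
termination_by k _ es => (k, sizeOf es)
end

/-! ## Turing machines -/

/-- Head moves. -/
inductive Dir : Type
  | L | S | R
deriving DecidableEq, Inhabited

def Dir.z : Dir → ℤ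
  | .L => -1
  | .S => 0
  | .R => 1

/-- A configuration: control state, input-head position, work-head position, work tape. -/
structure Cfg (Q : Type) where
  q : Q
  ipos : ℤ
  wpos : ℤ
  tape : ℤ → Option Bool

/-- The symbol of the read-only input tape at position `i` (blank outside the input). -/
def inputSym (x : List Bool) (i : ℤ) : Option Bool :=
  if 0 ≤ i then x[i.toNat]? else none

/-- A deterministic Turing machine with a read-only input tape and a read-write work tape. -/
structure TM where
  Q : Type
  [fin : Fintype Q]
  [deq : DecidableEq Q]
  δ : Q → Option Bool → Option Bool → Q × Option Bool × Dir × Dir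
  start : Q
  accept : Q
  reject : Q

attribute [instance] TM.fin TM.deq

def TM.init (M : TM) : Cfg M.Q := ⟨M.start, 0, 0, fun _ => none⟩

/-- One deterministic step (the accepting and rejecting states are halting). -/
def TM.step (M : TM) (x : List Bool) (c : Cfg M.Q) : Cfg M.Q :=
  if c.q = M.accept ∨ c.q = M.reject then c
  else
    let r := M.δ c.q (inputSym x c.ipos) (c.tape c.wpos)
    ⟨r.1, c.ipos + r.2.2.1.z, c.wpos + r.2.2.2.z,
      fun j => if j = c.wpos then r.2.1 else c.tape j⟩

/-- Configuration after `t` steps on input `x`. -/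
def TM.conf (M : TM) (x : List Bool) (t : Nat) : Cfg M.Q := (M.step x)^[t] M.init

/-- `M` decides `X`: reaches `accept` on members, `reject` on non-members. -/
def TM.DecidesTM (M : TM) (X : Set (List Bool)) : Prop :=
  ∀ x : List Bool,
    (x ∈ X → ∃ t, (M.conf x t).q = M.accept) ∧ (x ∉ X → ∃ t, (M.conf x t).q = M.reject)

/-- The work head of `M` stays within `s` cells of the origin on input `x`. -/
def TM.SpaceBound (M : TM) (x : List Bool) (s : Nat) : Prop :=
  ∀ t, ((M.conf x t).wpos).natAbs ≤ s

/-- `M` halts within `T` steps on input `x`. -/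
def TM.HaltsIn (M : TM) (x : List Bool) (T : Nat) : Prop :=
  ∃ t ≤ T, (M.conf x t).q = M.accept ∨ (M.conf x t).q = M.reject

/-- LOGSPACE: decidable by a deterministic TM in `O(log n)` work space. -/
def LOGSPACE : Set (Set (List Bool)) :=
  {X | ∃ M : TM, M.DecidesTM X ∧
        ∃ C : Nat, ∀ x, M.SpaceBound x (C * (Nat.log 2 x.length + 1))}

/-- PTIME: decidable by a deterministic TM in time `O(n^k)` for some `k`. -/
def PTIME : Set (Set (List Bool)) :=
  {X | ∃ M : TM, M.DecidesTM X ∧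
        ∃ C k : Nat, ∀ x, M.HaltsIn x (C * (x.length + 1) ^ k)}

/-- A nondeterministic Turing machine (read-only input tape, read-write work tape). -/
structure NTM where
  Q : Type
  [fin : Fintype Q]
  δ : Q → Option Bool → Option Bool → Finset (Q × Option Bool × Dir × Dir)
  start : Q
  accept : Q

attribute [instance] NTM.fin

def NTM.init (M : NTM) : Cfg M.Q := ⟨M.start, 0, 0, fun _ => none⟩

/-- One nondeterministic step. -/
def NTM.Step (M : NTM) (x : List Bool) (c c' : Cfg M.Q) : Prop :=
  ∃ r ∈ M.δ c.q (inputSym x c.ipos) (c.tape c.wpos),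
    c' = ⟨r.1, c.ipos + r.2.2.1.z, c.wpos + r.2.2.2.z,
          fun j => if j = c.wpos then r.2.1 else c.tape j⟩

/-- A step staying within work space `s`. -/
def NTM.StepB (M : NTM) (x : List Bool) (s : Nat) (c c' : Cfg M.Q) : Prop :=
  M.Step x c c' ∧ c'.wpos.natAbs ≤ s

/-- Some computation path within work space `s` accepts `x`. -/
def NTM.AcceptsInSpace (M : NTM) (x : List Bool) (s : Nat) : Prop :=
  ∃ c : Cfg M.Q, Relation.ReflTransGen (M.StepB x s) M.init c ∧ c.q = M.accept

/-- Nondeterministic space classes `NSPACE(O(f))`. -/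
def NSPACEF (f : Nat → Nat) : Set (Set (List Bool)) :=
  {X | ∃ (M : NTM) (C : Nat), ∀ x, x ∈ X ↔ M.AcceptsInSpace x (C * (f x.length + 1))}

/-- NLOGSPACE = NSPACE(O(log n)). -/
def NLOGSPACE : Set (Set (List Bool)) := NSPACEF (Nat.log 2)

/-! ## Decision classes of the programming languages -/

def decideCFTR : Set (Set (List Bool)) := {X | ∃ p : Prog, CFTRProg p ∧ Decides p X}
def decideCF : Set (Set (List Bool)) := {X | ∃ p : Prog, CFProg p ∧ Decides p X}
def decideCFpoly : Set (Set (List Bool)) := {X | ∃ p : Prog, CFpolyProg p ∧ Decides p X}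
def decideNCF : Set (Set (List Bool)) := {X | ∃ p : Prog, NDecides p X}
def decideNCFTR : Set (Set (List Bool)) := {X | ∃ p : Prog, TRProg p ∧ NDecides p X}


namespace NoOverlapAux

/-- Finite set of values arising on input `x`: booleans and suffixes of `x`. -/
def Vfin (x : List Bool) : Finset Val :=
  insert (Val.bool true) (insert (Val.bool false) ((x.tails.map Val.str).toFinset))

lemma bool_mem_Vfin (x : List Bool) (b : Bool) : Val.bool b ∈ Vfin x := by
  cases b <;> simp [Vfin]

lemma str_mem_Vfin {x s : List Bool} (hs : s <:+ x) : Val.str s ∈ Vfin x := by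
  have : s ∈ x.tails := (List.mem_tails _ _).mpr hs
  simp only [Vfin, Finset.mem_insert, List.mem_toFinset, List.mem_map]
  exact Or.inr (Or.inr ⟨s, this, rfl⟩)

lemma mem_Vfin_str {x s : List Bool} (h : Val.str s ∈ Vfin x) : s <:+ x := by
  simp only [Vfin, Finset.mem_insert, List.mem_toFinset, List.mem_map] at h
  rcases h with h | h | ⟨t, ht, he⟩
  · exact absurd h (by simp)
  · exact absurd h (by simp)
  · cases he; exact (List.mem_tails _ _).mp ht

lemma evalBase_mem {x : List Bool} {op v w} (hv : v ∈ Vfin x)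
    (h : evalBase op v = some w) : w ∈ Vfin x := by
  cases op <;> cases v <;> simp [evalBase] at h
  · exact h ▸ bool_mem_Vfin x _
  · exact h ▸ bool_mem_Vfin x _
  · rename_i s; cases s with
    | nil => simp [evalBase] at h
    | cons b s => simp [evalBase] at h; exact h ▸ bool_mem_Vfin x _
  · rename_i s; cases s with
    | nil => simp [evalBase] at h
    | cons b s =>
      simp [evalBase] at h
      subst h
      exact str_mem_Vfin ((List.suffix_cons b s).trans (mem_Vfin_str hv))

/-- Maximal arity in the program. -/
def maxAr (p : Prog) : Nat := p.foldr (fun d a => max d.arity a) 0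

/-- Maximal body size in the program. -/
noncomputable def maxB (p : Prog) : Nat := p.foldr (fun d a => max (sizeOf d.body) a) 0

lemma arity_le_maxAr {p : Prog} {d : Defn} (h : d ∈ p) : d.arity ≤ maxAr p := by
  induction p with
  | nil => cases h
  | cons a l ih =>
    rcases List.mem_cons.mp h with rfl | h
    · exact le_max_left _ _
    · exact (ih h).trans (le_max_right _ _)

lemma body_le_maxB {p : Prog} {d : Defn} (h : d ∈ p) : sizeOf d.body ≤ maxB p := by
  induction p with
  | nil => cases h
  | cons a l ih =>
    rcases List.mem_cons.mp h with rfl | h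
    · exact le_max_left _ _
    · exact (ih h).trans (le_max_right _ _)

/-- a call configuration is good. -/
def Good (p : Prog) (x : List Bool) (c : Nat × List Val) : Prop :=
  c.1 < p.length ∧ c.2.length ≤ maxAr p ∧ ∀ w ∈ c.2, w ∈ Vfin x

lemma one_le_evalH {p ρ e v n h} (d : EvalH p ρ e v n h) : 1 ≤ n := by
  cases d <;> omega

/-- Main invariant, by strong induction on (twice) the tree size. -/
lemma main_ind (p : Prog) (x : List Bool) : ∀ k : Nat,
    (∀ {ρ e v n h}, EvalH p ρ e v n h → 2*n ≤ k → (∀ w ∈ ρ, w ∈ Vfin x) →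
       v ∈ Vfin x ∧ (∀ c ∈ h, Good p x c) ∧
         n ≤ sizeOf e + (maxB p + 1) * h.length) ∧
    (∀ {ρ es ws m hs}, EvalArgsH p ρ es ws m hs → 2*m+1 ≤ k →
       (∀ w ∈ ρ, w ∈ Vfin x) →
       (∀ w ∈ ws, w ∈ Vfin x) ∧ (∀ c ∈ hs, Good p x c) ∧
         m ≤ sizeOf es + (maxB p + 1) * hs.length) := by
  intro k
  induction k using Nat.strong_induction_on with
  | _ k ih =>
    constructor
    · intro ρ e v n h d hk henv
      cases d with
      | tt => exact ⟨bool_mem_Vfin x _, by simp, by simp⟩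
      | ff => exact ⟨bool_mem_Vfin x _, by simp, by simp⟩
      | nil => exact ⟨str_mem_Vfin List.nil_suffix, by simp, by simp⟩
      | var hv =>
        exact ⟨henv _ (List.mem_of_getElem? hv), by simp, by simp⟩
      | @base _ op e' v' w n' h' d hb =>
        obtain ⟨hv, hg, hn⟩ := (ih (2*n') (by omega)).1 d le_rfl henv
        refine ⟨evalBase_mem hv hb, hg, ?_⟩
        have : sizeOf e' + 1 ≤ sizeOf (Exp.base op e') := by
          simp
        omega
      | @iteT _ e0 e1 e2 v' n0 n1 h0 h1 d0 d1 =>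
        obtain ⟨-, hg0, hn0⟩ := (ih (2*n0) (by omega)).1 d0 le_rfl henv
        obtain ⟨hv, hg1, hn1⟩ := (ih (2*n1) (by omega)).1 d1 le_rfl henv
        refine ⟨hv, ?_, ?_⟩
        · intro c hc
          rcases List.mem_append.mp hc with hc | hc
          · exact hg0 c hc
          · exact hg1 c hc
        · have hs : sizeOf e0 + sizeOf e1 + 1 ≤ sizeOf (Exp.ite e0 e1 e2) := by
            simp; omega
          have key : (maxB p + 1) * (h0 ++ h1).length =
              (maxB p + 1) * h0.length + (maxB p + 1) * h1.length := by
            rw [List.length_append]; ring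
          omega
      | @iteF _ e0 e1 e2 v' n0 n2 h0 h2 d0 d2 =>
        obtain ⟨-, hg0, hn0⟩ := (ih (2*n0) (by omega)).1 d0 le_rfl henv
        obtain ⟨hv, hg2, hn2⟩ := (ih (2*n2) (by omega)).1 d2 le_rfl henv
        refine ⟨hv, ?_, ?_⟩
        · intro c hc
          rcases List.mem_append.mp hc with hc | hc
          · exact hg0 c hc
          · exact hg2 c hc
        · have hs : sizeOf e0 + sizeOf e2 + 1 ≤ sizeOf (Exp.ite e0 e1 e2) := by
            simp; omega
          have key : (maxB p + 1) * (h0 ++ h2).length =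
              (maxB p + 1) * h0.length + (maxB p + 1) * h2.length := by
            rw [List.length_append]; ring
          omega
      | @ambL _ e1 e2 v' n' h' d =>
        obtain ⟨hv, hg, hn⟩ := (ih (2*n') (by omega)).1 d le_rfl henv
        refine ⟨hv, hg, ?_⟩
        have : sizeOf e1 + 1 ≤ sizeOf (Exp.amb e1 e2) := by simp; omega
        omega
      | @ambR _ e1 e2 v' n' h' d =>
        obtain ⟨hv, hg, hn⟩ := (ih (2*n') (by omega)).1 d le_rfl henv
        refine ⟨hv, hg, ?_⟩
        have : sizeOf e2 + 1 ≤ sizeOf (Exp.amb e1 e2) := by simp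
        omega
      | @call _ f es ws dfn v' m n' hs h' hf da hl db =>
        have hn'1 : 1 ≤ n' := one_le_evalH db
        obtain ⟨hws, hgs, hm⟩ := (ih (2*m+1) (by omega)).2 da le_rfl henv
        obtain ⟨hv, hg, hn⟩ := (ih (2*n') (by omega)).1 db le_rfl hws
        have hdp : dfn ∈ p := List.mem_of_getElem? hf
        have hflt : f < p.length := by
          by_contra hge
          simp [List.getElem?_eq_none (le_of_not_gt hge)] at hf
        refine ⟨hv, ?_, ?_⟩
        · intro c hc
          rcases List.mem_append.mp hc with hc | hc
          · exact hgs c hc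
          · rcases List.mem_cons.mp hc with rfl | hc
            · exact ⟨hflt, hl ▸ arity_le_maxAr hdp, hws⟩
            · exact hg c hc
        · have hbB : sizeOf dfn.body ≤ maxB p := body_le_maxB hdp
          have hsz : sizeOf es + 1 ≤ sizeOf (Exp.call f es) := by simp
          have key : (maxB p + 1) * (hs ++ (f, ws) :: h').length =
              (maxB p + 1) * hs.length + (maxB p + 1) * h'.length + (maxB p + 1) := by
            simp [List.length_append]; ring
          omega
    · intro ρ es ws m hs d hk henv
      cases d with
      | nil => exact ⟨by simp, by simp, by simp⟩
      | @cons _ e es' v vs n m' h hs' de ds =>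
        have hn1 : 1 ≤ n := one_le_evalH de
        obtain ⟨hv, hg, hn⟩ := (ih (2*n) (by omega)).1 de le_rfl henv
        obtain ⟨hvs, hgs, hm⟩ := (ih (2*m'+1) (by omega)).2 ds le_rfl henv
        refine ⟨?_, ?_, ?_⟩
        · intro w hw
          rcases List.mem_cons.mp hw with rfl | hw
          · exact hv
          · exact hvs w hw
        · intro c hc
          rcases List.mem_append.mp hc with hc | hc
          · exact hg c hc
          · exact hgs c hc
        · have hsz : sizeOf e + sizeOf es' + 1 ≤ sizeOf (e :: es') := by simp
          have key : (maxB p + 1) * (h ++ hs').length =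
              (maxB p + 1) * h.length + (maxB p + 1) * hs'.length := by
            rw [List.length_append]; ring
          omega

/-- Lists of length at most `A` with entries in `V`. -/
def listsLE (V : Finset Val) : Nat → Finset (List Val)
  | 0 => {[]}
  | A + 1 => insert [] ((V ×ˢ listsLE V A).image fun q => q.1 :: q.2)

lemma mem_listsLE {V : Finset Val} :
    ∀ {A : Nat} {l : List Val}, l.length ≤ A → (∀ w ∈ l, w ∈ V) → l ∈ listsLE V A := by
  intro A
  induction A with
  | zero =>
    intro l hl _
    rw [List.length_eq_zero_iff.mp (Nat.le_zero.mp hl)]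
    simp [listsLE]
  | succ A ihA =>
    intro l hl hw
    cases l with
    | nil => simp [listsLE]
    | cons a l =>
      refine Finset.mem_insert_of_mem (Finset.mem_image.mpr ⟨(a, l), ?_, rfl⟩)
      refine Finset.mem_product.mpr ⟨hw a (by simp), ?_⟩
      exact ihA (by simpa using Nat.succ_le_succ_iff.mp hl) fun w h => hw w (by simp [h])

lemma card_listsLE (V : Finset Val) : ∀ A, (listsLE V A).card ≤ (V.card + 1) ^ A := by
  intro A
  induction A with
  | zero => simp [listsLE]
  | succ A ihA =>
    have h1 : (listsLE V (A + 1)).card ≤ 1 + V.card * (listsLE V A).card := by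
      refine (Finset.card_insert_le _ _).trans ?_
      have := Finset.card_image_le (s := V ×ˢ listsLE V A)
        (f := fun q : Val × List Val => q.1 :: q.2)
      rw [Finset.card_product] at this
      omega
    have h2 : V.card * (listsLE V A).card ≤ V.card * (V.card + 1) ^ A :=
      Nat.mul_le_mul_left _ ihA
    have h3 : 1 ≤ (V.card + 1) ^ A := Nat.one_le_pow _ _ (by omega)
    calc (listsLE V (A + 1)).card ≤ 1 + V.card * (V.card + 1) ^ A := by omega
      _ ≤ (V.card + 1) ^ A + V.card * (V.card + 1) ^ A := by omega
      _ = (V.card + 1) ^ (A + 1) := by ring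

lemma hist_len_le {p : Prog} {x : List Bool} {h : List (Nat × List Val)}
    (hnd : h.Nodup) (hg : ∀ c ∈ h, Good p x c) :
    h.length ≤ p.length * ((Vfin x).card + 1) ^ (maxAr p) := by
  have hsub : h.toFinset ⊆ Finset.range p.length ×ˢ listsLE (Vfin x) (maxAr p) := by
    intro c hc
    obtain ⟨h1, h2, h3⟩ := hg c (List.mem_toFinset.mp hc)
    exact Finset.mem_product.mpr ⟨Finset.mem_range.mpr h1, mem_listsLE h2 h3⟩
  calc h.length = h.toFinset.card := (List.toFinset_card_of_nodup hnd).symm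
    _ ≤ (Finset.range p.length ×ˢ listsLE (Vfin x) (maxAr p)).card :=
        Finset.card_le_card hsub
    _ = p.length * (listsLE (Vfin x) (maxAr p)).card := by
        rw [Finset.card_product, Finset.card_range]
    _ ≤ p.length * ((Vfin x).card + 1) ^ (maxAr p) :=
        Nat.mul_le_mul_left _ (Nat.pow_le_pow_left (by omega) _ |>.trans'
          (Nat.pow_le_pow_left le_rfl _) |>.trans' (card_listsLE _ _))

lemma card_Vfin_le (x : List Bool) : (Vfin x).card ≤ x.length + 3 := by
  refine (Finset.card_insert_le _ _).trans ?_
  have h2 : (insert (Val.bool false) ((x.tails.map Val.str).toFinset)).card ≤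
      1 + (x.tails.map Val.str).toFinset.card := by
    have := Finset.card_insert_le (Val.bool false) ((x.tails.map Val.str).toFinset)
    omega
  have h3 : (x.tails.map Val.str).toFinset.card ≤ x.length + 1 := by
    refine (List.toFinset_card_le _).trans ?_
    simp
  omega

end NoOverlapAux

/-- a CF program that terminates on all inputs and has no call overlap
(no defined function is ever called twice with the same argument tuple, i.e. every
call history has no duplicates) runs in polynomial time — it is in CFpoly. -/
theorem no_call_overlap_implies_CFpoly (p : Prog) (hp : CFProg p)
    (hterm : ∀ x : List Bool, ∃ v, Run p x v)
    (hnov : ∀ (x : List Bool) (v : Val) (n : Nat) (h : List (Nat × List Val)),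
        RunH p x v n h → h.Nodup) :
    CFpolyProg p := by
  classical
  refine ⟨hp, hterm, ?_⟩
  refine ⟨Polynomial.C (sizeOf p.entry) +
      Polynomial.C ((NoOverlapAux.maxB p + 1) * p.length) *
        (Polynomial.X + Polynomial.C 4) ^ (NoOverlapAux.maxAr p), ?_⟩
  rintro x n ⟨v, h, hrun⟩
  have henv : ∀ w ∈ [Val.str x], w ∈ NoOverlapAux.Vfin x := by
    intro w hw
    rcases List.mem_singleton.mp hw with rfl
    exact NoOverlapAux.str_mem_Vfin (List.suffix_refl x)
  obtain ⟨-, hg, hn⟩ := (NoOverlapAux.main_ind p x (2 * n)).1 hrun le_rfl henv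
  have hnd : h.Nodup := hnov x v n h hrun
  have hlen := NoOverlapAux.hist_len_le hnd hg
  have hcard : (NoOverlapAux.Vfin x).card + 1 ≤ x.length + 4 := by
    have := NoOverlapAux.card_Vfin_le x; omega
  have hpow : ((NoOverlapAux.Vfin x).card + 1) ^ (NoOverlapAux.maxAr p) ≤
      (x.length + 4) ^ (NoOverlapAux.maxAr p) := Nat.pow_le_pow_left hcard _
  have hlen2 : h.length ≤ p.length * (x.length + 4) ^ (NoOverlapAux.maxAr p) :=
    hlen.trans (Nat.mul_le_mul_left _ hpow)
  have hfin : n ≤ sizeOf p.entry +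
      (NoOverlapAux.maxB p + 1) * (p.length * (x.length + 4) ^ (NoOverlapAux.maxAr p)) := by
    have := Nat.mul_le_mul_left (NoOverlapAux.maxB p + 1) hlen2
    omega
  have heval : (Polynomial.C (sizeOf p.entry) +
      Polynomial.C ((NoOverlapAux.maxB p + 1) * p.length) *
        (Polynomial.X + Polynomial.C 4) ^ (NoOverlapAux.maxAr p)).eval x.length =
      sizeOf p.entry +
        (NoOverlapAux.maxB p + 1) * p.length * (x.length + 4) ^ (NoOverlapAux.maxAr p) := by
    simp [Polynomial.eval_add, Polynomial.eval_mul, Polynomial.eval_pow]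
  rw [heval, Nat.mul_assoc]
  exact hfin
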